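/- In the two-point hypothesis-testing setting with κ ∈ [0,1], working posterior null probability Ṗ₀ ∈ (0,1), lower bound P̲₀ ≤ Ṗ₀, and p-value p ∈ (0,1), the moderate posterior null probability minimizing the binary KL divergence to the confidence posterior over the mixture interval [κP̲₀ + (1−κ)Ṗ₀, κ + (1−κ)Ṗ₀) equals: κP̲₀ + (1−κ)Ṗ₀ if p < κP̲₀ + (1−κ)Ṗ₀; p if κP̲₀ + (1−κ)Ṗ₀ ≤ p ≤ κ + (1−κ)Ṗ₀; and κ + (1−κ)Ṗ₀ if p > κ + (1−κ)Ṗ₀. -/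

import Mathlib

/-- Binary Kullback-Leibler divergence `d(q, p) = q log(q/p) + (1-q) log((1-q)/(1-p))`. -/
noncomputable def binKL (q p : ℝ) : ℝ :=
  q * Real.log (q / p) + (1 - q) * Real.log ((1 - q) / (1 - p))


lemma binKL_nonneg {p q : ℝ} (hp : p ∈ Set.Ioo (0:ℝ) 1) (hq : q ∈ Set.Ioo (0:ℝ) 1) :
    0 ≤ binKL q p := by
  obtain ⟨hp0, hp1⟩ := hp; obtain ⟨hq0, hq1⟩ := hq
  have h1 : Real.log (p/q) ≤ p/q - 1 := Real.log_le_sub_one_of_pos (by positivity)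
  have h2 : Real.log ((1-p)/(1-q)) ≤ (1-p)/(1-q) - 1 :=
    Real.log_le_sub_one_of_pos (by apply div_pos <;> linarith)
  have e1 : Real.log (q/p) = - Real.log (p/q) := by
    rw [← Real.log_inv]; congr 1; field_simp
  have e2 : Real.log ((1-q)/(1-p)) = - Real.log ((1-p)/(1-q)) := by
    rw [← Real.log_inv]; congr 1; field_simp
  have m1 : q * (p/q) = p := by field_simp
  have m2 : (1-q) * ((1-p)/(1-q)) = 1-p := by
    rw [mul_comm, div_mul_cancel₀ _ (by linarith : (1:ℝ)-q ≠ 0)]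
  have := mul_le_mul_of_nonneg_left h1 hq0.le
  have := mul_le_mul_of_nonneg_left h2 (by linarith : (0:ℝ) ≤ 1-q)
  unfold binKL
  rw [e1, e2]
  nlinarith

lemma binKL_hasDerivAt {p q : ℝ} (hp : p ∈ Set.Ioo (0:ℝ) 1) (hq : q ∈ Set.Ioo (0:ℝ) 1) :
    HasDerivAt (fun x => binKL x p)
      (Real.log q - Real.log p - Real.log (1-q) + Real.log (1-p)) q := by
  obtain ⟨hp0, hp1⟩ := hp; obtain ⟨hq0, hq1⟩ := hq
  have h1 : HasDerivAt (fun x : ℝ => x * Real.log x) (Real.log q + 1) q :=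
    Real.hasDerivAt_mul_log hq0.ne'
  have h2 : HasDerivAt (fun x : ℝ => x * Real.log p) (Real.log p) q :=
    hasDerivAt_mul_const _
  have hsub : HasDerivAt (fun x : ℝ => 1 - x) (-1) q := by
    simpa using (hasDerivAt_id' q).const_sub (1:ℝ)
  have h3 : HasDerivAt (fun x : ℝ => (1-x) * Real.log (1-x))
      ((Real.log (1-q) + 1) * (-1)) q :=
    (Real.hasDerivAt_mul_log (by linarith : (1:ℝ)-q ≠ 0)).comp q hsub
  have h4 : HasDerivAt (fun x : ℝ => (1-x) * Real.log (1-p)) ((-1) * Real.log (1-p)) q :=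
    hsub.mul_const _
  have hg : HasDerivAt (fun x : ℝ => x * Real.log x - x * Real.log p +
      ((1-x) * Real.log (1-x) - (1-x) * Real.log (1-p)))
      (Real.log q - Real.log p - Real.log (1-q) + Real.log (1-p)) q := by
    have := (h1.sub h2).add (h3.sub h4)
    exact this.congr_deriv (by ring)
  apply hg.congr_of_eventuallyEq
  filter_upwards [Ioo_mem_nhds hq0 hq1] with x hx
  obtain ⟨hx0, hx1⟩ := hx
  unfold binKL
  rw [Real.log_div hx0.ne' hp0.ne', Real.log_div (by linarith : (1:ℝ)-x ≠ 0) (by linarith : (1:ℝ)-p ≠ 0)]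
  ring

lemma binKL_monoOn {p : ℝ} (hp : p ∈ Set.Ioo (0:ℝ) 1) :
    MonotoneOn (fun q => binKL q p) (Set.Ico p 1) := by
  have hsub : Set.Ico p 1 ⊆ Set.Ioo 0 1 := fun x hx => ⟨lt_of_lt_of_le hp.1 hx.1, hx.2⟩
  apply monotoneOn_of_deriv_nonneg (convex_Ico p 1)
  · exact fun x hx => (binKL_hasDerivAt hp (hsub hx)).continuousAt.continuousWithinAt
  · intro x hx
    rw [interior_Ico] at hx
    exact (binKL_hasDerivAt hp (hsub (Set.Ioo_subset_Ico_self hx))).differentiableAt.differentiableWithinAt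
  · intro x hx
    rw [interior_Ico] at hx
    have hx' := hsub (Set.Ioo_subset_Ico_self hx)
    rw [(binKL_hasDerivAt hp hx').deriv]
    have l1 : Real.log p ≤ Real.log x := Real.log_le_log hp.1 hx.1.le
    have l2 : Real.log (1-x) ≤ Real.log (1-p) :=
      Real.log_le_log (by linarith [hx'.2]) (by linarith [hx.1])
    linarith

lemma binKL_antiOn {p : ℝ} (hp : p ∈ Set.Ioo (0:ℝ) 1) :
    AntitoneOn (fun q => binKL q p) (Set.Ioc 0 p) := by
  have hsub : Set.Ioc 0 p ⊆ Set.Ioo 0 1 := fun x hx => ⟨hx.1, lt_of_le_of_lt hx.2 hp.2⟩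
  apply antitoneOn_of_deriv_nonpos (convex_Ioc 0 p)
  · exact fun x hx => (binKL_hasDerivAt hp (hsub hx)).continuousAt.continuousWithinAt
  · intro x hx
    rw [interior_Ioc] at hx
    exact (binKL_hasDerivAt hp (hsub (Set.Ioo_subset_Ioc_self hx))).differentiableAt.differentiableWithinAt
  · intro x hx
    rw [interior_Ioc] at hx
    have hx' := hsub (Set.Ioo_subset_Ioc_self hx)
    rw [(binKL_hasDerivAt hp hx').deriv]
    have l1 : Real.log x ≤ Real.log p := Real.log_le_log hx.1 hx.2.le
    have l2 : Real.log (1-p) ≤ Real.log (1-x) :=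
      Real.log_le_log (by linarith [hp.2]) (by linarith [hx.2])
    linarith

/-- The moderate posterior null probability at caution `κ`: minimizing the binary KL
divergence to the confidence posterior (null probability `p`) over the mixture interval
`[κ P̲₀ + (1-κ) Pdot₀, κ + (1-κ) Pdot₀)` gives `κ P̲₀ + (1-κ) Pdot₀` if `p` is below the interval,
`p` if `p` is inside, and `κ + (1-κ) Pdot₀` if `p` is above. -/
theorem moderate_posterior_null_prob
    (κ P₀lb Pdot₀ p : ℝ) (hκ₀ : 0 ≤ κ) (hκ₁ : κ ≤ 1)
    (hPdot₀ : Pdot₀ ∈ Set.Ioo (0:ℝ) 1) (hlb₀ : 0 < P₀lb) (hlb : P₀lb ≤ Pdot₀)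
    (hp : p ∈ Set.Ioo (0:ℝ) 1) :
    ∀ q ∈ Set.Ico (κ * P₀lb + (1 - κ) * Pdot₀) (κ + (1 - κ) * Pdot₀),
      binKL (if p < κ * P₀lb + (1 - κ) * Pdot₀ then κ * P₀lb + (1 - κ) * Pdot₀
             else if p ≤ κ + (1 - κ) * Pdot₀ then p
             else κ + (1 - κ) * Pdot₀) p ≤ binKL q p := by
  intro q hq
  obtain ⟨hqL, hqR⟩ := hq
  set L := κ * P₀lb + (1 - κ) * Pdot₀ with hL
  set R := κ + (1 - κ) * Pdot₀ with hR
  have hκ' : (0:ℝ) ≤ 1 - κ := by linarith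
  have hL0 : 0 < L := by nlinarith [mul_le_mul_of_nonneg_left hlb hκ']
  have hR1 : R ≤ 1 := by nlinarith [mul_le_mul_of_nonneg_left hPdot₀.2.le hκ']
  have hq0 : 0 < q := lt_of_lt_of_le hL0 hqL
  have hq1 : q < 1 := lt_of_lt_of_le hqR hR1
  split_ifs with h1 h2
  · -- p < L ≤ q : increasing branch
    exact binKL_monoOn hp ⟨h1.le, lt_of_le_of_lt hqL hq1⟩
      ⟨le_trans h1.le hqL, hq1⟩ hqL
  · -- L ≤ p ≤ R : minimizer p, binKL p p = 0
    have : binKL p p = 0 := by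
      unfold binKL
      rw [div_self hp.1.ne', div_self (by linarith [hp.2] : (1:ℝ)-p ≠ 0), Real.log_one]
      ring
    rw [this]
    exact binKL_nonneg hp ⟨hq0, hq1⟩
  · -- p > R > q : decreasing branch
    push_neg at h1 h2
    exact binKL_antiOn hp ⟨hq0, hqR.le.trans h2.le⟩
      ⟨lt_of_lt_of_le hL0 (hqL.trans hqR.le), h2.le⟩ hqR.le
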